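/- arXiv:1506.05901 — 3 statements merged into one kernel-verified Lean document; each statement's English description precedes it below -/
import Mathlib

section
/- For $-1 < \beta \le \alpha \le 0$, the glued football metric $g = e^{2u_{\alpha,\beta}}g_0$ has Gaussian curvature $K(g)(z) = 1$ for $0 < |z| < 1$ and $K(g)(z) = \frac{(\beta+1)^2}{(\alpha+1)^2}$ for $|z| > 1$. In particular its curvature pinching constant is $\rho(g) = \frac{(\beta+1)^2}{(\alpha+1)^2}$. -/
open Real

/-- The conformal factor of the glued football `S²_{α,β}`. -/
noncomputable def gluedFootball (α β : ℝ) (z : ℂ) : ℝ :=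
  if ‖z‖ < 1 then
    Real.log (2 * (α + 1) * ‖z‖ ^ α / (1 + ‖z‖ ^ (2 + 2 * α)))
  else
    Real.log (2 * (α + 1) * ‖z‖ ^ β / (1 + ‖z‖ ^ (2 + 2 * β)))

/-- The Euclidean Laplacian of a function `u : ℂ → ℝ`. -/
noncomputable def lap (u : ℂ → ℝ) (z : ℂ) : ℝ :=
  iteratedFDeriv ℝ 2 u z ![1, 1] + iteratedFDeriv ℝ 2 u z ![Complex.I, Complex.I]

open Filter Topology

/-! ### Auxiliary definitions and lemmas -/

/-- The squared modulus, written in real coordinates. -/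
noncomputable def sq2 (z : ℂ) : ℝ := z.re * z.re + z.im * z.im

lemma sq2_eq (z : ℂ) : sq2 z = ‖z‖ ^ 2 := by
  rw [Complex.sq_norm, Complex.normSq_apply]; rfl

lemma sq2_pos {z : ℂ} (hz : z ≠ 0) : 0 < sq2 z := by
  have : Complex.normSq z = sq2 z := rfl
  rw [← this]; exact Complex.normSq_pos.mpr hz

/-- The (constant-coefficient bilinear) derivative data for `sq2`. -/
noncomputable def Lb : ℂ →L[ℝ] ℂ →L[ℝ] ℝ :=
  (2 : ℝ) • (Complex.reCLM.smulRight Complex.reCLM + Complex.imCLM.smulRight Complex.imCLM)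

lemma Lb_apply (z w : ℂ) : Lb z w = 2 * (z.re * w.re) + 2 * (z.im * w.im) := by simp [Lb]

lemma hasFDerivAt_sq2 (z : ℂ) : HasFDerivAt sq2 (Lb z) z := by
  have hre : HasFDerivAt (fun w : ℂ => w.re) Complex.reCLM z := Complex.reCLM.hasFDerivAt
  have him : HasFDerivAt (fun w : ℂ => w.im) Complex.imCLM z := Complex.imCLM.hasFDerivAt
  have h1 := (hre.mul hre).add (him.mul him)
  have h2 : (z.re • Complex.reCLM + z.re • Complex.reCLM)
      + (z.im • Complex.imCLM + z.im • Complex.imCLM) = Lb z := by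
    ext w
    simp [Lb_apply]
    ring
  exact h2 ▸ h1

/-- The radial profile (in the variable `t = |z|²`) of the conformal factor. -/
noncomputable def phi (γ c t : ℝ) : ℝ := c + γ / 2 * Real.log t - Real.log (1 + t ^ (1 + γ))

noncomputable def phi1 (γ t : ℝ) : ℝ := γ / 2 * t⁻¹ - (1 + γ) * t ^ γ / (1 + t ^ (1 + γ))

noncomputable def phi2 (γ t : ℝ) : ℝ :=
  γ / 2 * (-(t ^ 2)⁻¹) -
    ((1 + γ) * (γ * t ^ (γ - 1)) * (1 + t ^ (1 + γ)) - (1 + γ) * t ^ γ * ((1 + γ) * t ^ γ)) /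
      (1 + t ^ (1 + γ)) ^ 2

lemma denom_pos (γ : ℝ) {t : ℝ} (ht : 0 < t) : 0 < 1 + t ^ (1 + γ) := by positivity

lemma hasDerivAt_T (γ : ℝ) {t : ℝ} (ht : 0 < t) :
    HasDerivAt (fun t : ℝ => t ^ (1 + γ)) ((1 + γ) * t ^ γ) t := by
  simpa [show 1 + γ - 1 = γ by ring] using
    Real.hasDerivAt_rpow_const (x := t) (p := 1 + γ) (Or.inl ht.ne')

lemma hasDerivAt_phi (γ c : ℝ) {t : ℝ} (ht : 0 < t) :
    HasDerivAt (phi γ c) (phi1 γ t) t := by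
  have h1 : HasDerivAt (fun t : ℝ => c + γ / 2 * Real.log t) (γ / 2 * t⁻¹) t :=
    ((Real.hasDerivAt_log ht.ne').const_mul (γ / 2)).const_add c
  have h2 : HasDerivAt (fun t : ℝ => Real.log (1 + t ^ (1 + γ)))
      ((1 + γ) * t ^ γ / (1 + t ^ (1 + γ))) t :=
    ((hasDerivAt_T γ ht).const_add 1).log (denom_pos γ ht).ne'
  exact h1.sub h2

lemma hasDerivAt_phi1 (γ : ℝ) {t : ℝ} (ht : 0 < t) :
    HasDerivAt (phi1 γ) (phi2 γ t) t := by
  have h1 : HasDerivAt (fun t : ℝ => γ / 2 * t⁻¹) (γ / 2 * (-(t ^ 2)⁻¹)) t :=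
    (hasDerivAt_inv ht.ne').const_mul (γ / 2)
  have hnum : HasDerivAt (fun t : ℝ => (1 + γ) * t ^ γ) ((1 + γ) * (γ * t ^ (γ - 1))) t :=
    (Real.hasDerivAt_rpow_const (x := t) (p := γ) (Or.inl ht.ne')).const_mul (1 + γ)
  have hden : HasDerivAt (fun t : ℝ => 1 + t ^ (1 + γ)) ((1 + γ) * t ^ γ) t :=
    (hasDerivAt_T γ ht).const_add 1
  have h2 := hnum.div hden (denom_pos γ ht).ne'
  exact h1.sub h2

lemma lap_value (γ : ℝ) {t : ℝ} (ht : 0 < t) :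
    4 * phi1 γ t + 4 * t * phi2 γ t = -4 * (1 + γ) ^ 2 * t ^ γ / (1 + t ^ (1 + γ)) ^ 2 := by
  have hA : 0 < t ^ γ := Real.rpow_pos_of_pos ht γ
  have hT : t ^ (1 + γ) = t * t ^ γ := by
    rw [Real.rpow_add ht, Real.rpow_one]
  have hγ1 : t ^ (γ - 1) = t ^ γ / t := by
    rw [Real.rpow_sub ht, Real.rpow_one]
  have hD : (0 : ℝ) < 1 + t * t ^ γ := by positivity
  rw [phi1, phi2, hT, hγ1]
  field_simp
  ring

lemma lap_congr {u v : ℂ → ℝ} {z : ℂ} (h : u =ᶠ[𝓝 z] v) : lap u z = lap v z := by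
  have h2 : fderiv ℝ u =ᶠ[𝓝 z] fderiv ℝ v :=
    h.eventually_nhds.mono fun w hw => Filter.EventuallyEq.fderiv_eq hw
  unfold lap
  rw [iteratedFDeriv_two_apply, iteratedFDeriv_two_apply, iteratedFDeriv_two_apply,
    iteratedFDeriv_two_apply, h2.fderiv_eq]

lemma lap_phi (γ c : ℝ) {z : ℂ} (hz : z ≠ 0) :
    lap (fun w => phi γ c (sq2 w)) z
      = -4 * (1 + γ) ^ 2 * (sq2 z) ^ γ / (1 + (sq2 z) ^ (1 + γ)) ^ 2 := by
  set t := sq2 z with htdef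
  have ht : 0 < t := sq2_pos hz
  set g : ℂ → (ℂ →L[ℝ] ℝ) := fun w => phi1 γ (sq2 w) • Lb w with hg
  have hcont : ContinuousAt sq2 z := (hasFDerivAt_sq2 z).continuousAt
  have hev : ∀ᶠ w in 𝓝 z, 0 < sq2 w := hcont.eventually (eventually_gt_nhds ht)
  have hU' : ∀ w : ℂ, 0 < sq2 w → HasFDerivAt (fun w => phi γ c (sq2 w)) (g w) w := by
    intro w hw
    exact (hasDerivAt_phi γ c hw).comp_hasFDerivAt w (hasFDerivAt_sq2 w)
  have hfe : fderiv ℝ (fun w => phi γ c (sq2 w)) =ᶠ[𝓝 z] g :=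
    hev.mono fun w hw => (hU' w hw).fderiv
  have hc : HasFDerivAt (fun w => phi1 γ (sq2 w)) (phi2 γ t • Lb z) z :=
    by have h := hasDerivAt_phi1 γ ht; rw [htdef] at h; exact h.comp_hasFDerivAt z (hasFDerivAt_sq2 z)
  have hD : HasFDerivAt g (phi1 γ t • Lb + (phi2 γ t • Lb z).smulRight (Lb z)) z :=
    hc.smul Lb.hasFDerivAt
  have key : fderiv ℝ (fderiv ℝ (fun w => phi γ c (sq2 w))) z
      = phi1 γ t • Lb + (phi2 γ t • Lb z).smulRight (Lb z) := by
    rw [hfe.fderiv_eq]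
    exact hD.fderiv
  unfold lap
  rw [iteratedFDeriv_two_apply, iteratedFDeriv_two_apply, key]
  have e1 : Lb 1 1 = 2 := by simp [Lb_apply]
  have eI : Lb Complex.I Complex.I = 2 := by simp [Lb_apply]
  have ez1 : Lb z 1 = 2 * z.re := by simp [Lb_apply]
  have ezI : Lb z Complex.I = 2 * z.im := by simp [Lb_apply]
  simp only [Matrix.cons_val_zero, Matrix.cons_val_one, Matrix.head_cons,
    ContinuousLinearMap.add_apply, ContinuousLinearMap.smul_apply,
    ContinuousLinearMap.smulRight_apply, e1, eI, ez1, ezI, smul_eq_mul]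
  have : phi1 γ t * 2 + phi2 γ t * (2 * z.re) * (2 * z.re)
      + (phi1 γ t * 2 + phi2 γ t * (2 * z.im) * (2 * z.im))
      = 4 * phi1 γ t + 4 * t * phi2 γ t := by
    rw [htdef]; unfold sq2; ring
  rw [this]
  exact lap_value γ ht

lemma log_expr_eq (α γ : ℝ) (hα : 0 < α + 1) {w : ℂ} (h0 : w ≠ 0) :
    Real.log (2 * (α + 1) * ‖w‖ ^ γ / (1 + ‖w‖ ^ (2 + 2 * γ)))
      = phi γ (Real.log (2 * (α + 1))) (sq2 w) := by
  set r := ‖w‖ with hr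
  have hrpos : 0 < r := norm_pos_iff.mpr h0
  have hrγ : 0 < r ^ γ := Real.rpow_pos_of_pos hrpos γ
  have hden : (0 : ℝ) < 1 + r ^ (2 + 2 * γ) := by positivity
  have hsq : sq2 w = r ^ 2 := sq2_eq w
  have hpow : (sq2 w) ^ (1 + γ) = r ^ (2 + 2 * γ) := by
    rw [hsq, ← Real.rpow_natCast r 2, ← Real.rpow_mul hrpos.le]
    norm_num
    ring_nf
  have hlog : Real.log (sq2 w) = 2 * Real.log r := by
    rw [hsq, Real.log_pow]; norm_num
  rw [phi, hpow, hlog, Real.log_div (by positivity) hden.ne',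
    Real.log_mul (by positivity) hrγ.ne', Real.log_rpow hrpos]
  ring

lemma glued_inner (α β : ℝ) (hα : 0 < α + 1) {w : ℂ} (h0 : w ≠ 0) (h1 : ‖w‖ < 1) :
    gluedFootball α β w = phi α (Real.log (2 * (α + 1))) (sq2 w) := by
  rw [gluedFootball, if_pos h1, log_expr_eq α α hα h0]

lemma glued_outer (α β : ℝ) (hα : 0 < α + 1) {w : ℂ} (h1 : 1 ≤ ‖w‖) :
    gluedFootball α β w = phi β (Real.log (2 * (α + 1))) (sq2 w) := by
  have h0 : w ≠ 0 := by
    intro h; rw [h, norm_zero] at h1; linarith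
  rw [gluedFootball, if_neg (not_lt.mpr h1), log_expr_eq α β hα h0]

lemma curv_calc (α γ : ℝ) (hα : 0 < α + 1) {r : ℝ} (hr : 0 < r) :
    -Real.exp (-2 * Real.log (2 * (α + 1) * r ^ γ / (1 + r ^ (2 + 2 * γ)))) *
      (-4 * (1 + γ) ^ 2 * ((r ^ 2 : ℝ)) ^ γ / (1 + ((r ^ 2 : ℝ)) ^ (1 + γ)) ^ 2)
      = (γ + 1) ^ 2 / (α + 1) ^ 2 := by
  have hR : 0 < r ^ γ := Real.rpow_pos_of_pos hr γ
  have hS : 0 < r ^ (2 + 2 * γ) := Real.rpow_pos_of_pos hr _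
  have e1 : ((r ^ 2 : ℝ)) ^ γ = (r ^ γ) ^ 2 := by
    rw [← Real.rpow_natCast r 2, ← Real.rpow_mul hr.le, ← Real.rpow_natCast (r ^ γ) 2,
      ← Real.rpow_mul hr.le]
    ring_nf
  have e2 : ((r ^ 2 : ℝ)) ^ (1 + γ) = r ^ (2 + 2 * γ) := by
    rw [← Real.rpow_natCast r 2, ← Real.rpow_mul hr.le]
    norm_num
    ring_nf
  set X : ℝ := 2 * (α + 1) * r ^ γ / (1 + r ^ (2 + 2 * γ)) with hXdef
  have hX : 0 < X := by positivity
  have hexp : Real.exp (-2 * Real.log X) = (X ^ 2)⁻¹ := by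
    rw [show (-2 : ℝ) * Real.log X = Real.log ((X ^ 2)⁻¹) by
      rw [Real.log_inv, Real.log_pow]; push_cast; ring,
      Real.exp_log (by positivity)]
  rw [e1, e2, hexp, hXdef]
  field_simp
  ring

theorem stmt4 (α β : ℝ) (h1 : -1 < β) (h2 : β ≤ α) (h3 : α ≤ 0) :
    (∀ z : ℂ, z ≠ 0 → ‖z‖ < 1 →
      -Real.exp (-2 * gluedFootball α β z) * lap (gluedFootball α β) z = 1) ∧
    (∀ z : ℂ, 1 < ‖z‖ →
      -Real.exp (-2 * gluedFootball α β z) * lap (gluedFootball α β) z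
        = (β + 1) ^ 2 / (α + 1) ^ 2) ∧
    IsLeast {k : ℝ | ∃ z : ℂ, z ≠ 0 ∧ ‖z‖ ≠ 1 ∧
        k = -Real.exp (-2 * gluedFootball α β z) * lap (gluedFootball α β) z}
      ((β + 1) ^ 2 / (α + 1) ^ 2) ∧
    IsGreatest {k : ℝ | ∃ z : ℂ, z ≠ 0 ∧ ‖z‖ ≠ 1 ∧
        k = -Real.exp (-2 * gluedFootball α β z) * lap (gluedFootball α β) z} 1 := by
  have hα1 : (0 : ℝ) < α + 1 := by linarith
  have hβ1 : (0 : ℝ) < β + 1 := by linarith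
  set c : ℝ := Real.log (2 * (α + 1)) with hc
  -- inner curvature
  have Kin : ∀ z : ℂ, z ≠ 0 → ‖z‖ < 1 →
      -Real.exp (-2 * gluedFootball α β z) * lap (gluedFootball α β) z = 1 := by
    intro z h0 hlt
    have e1 : ∀ᶠ w in 𝓝 z, ‖w‖ < 1 :=
      continuous_norm.continuousAt.eventually (eventually_lt_nhds hlt)
    have e2 : ∀ᶠ w in 𝓝 z, w ≠ 0 := eventually_ne_nhds h0
    have hev : gluedFootball α β =ᶠ[𝓝 z] fun w => phi α c (sq2 w) := by
      filter_upwards [e1, e2] with w hw1 hw2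
      exact glued_inner α β hα1 hw2 hw1
    have hlap : lap (gluedFootball α β) z
        = -4 * (1 + α) ^ 2 * (sq2 z) ^ α / (1 + (sq2 z) ^ (1 + α)) ^ 2 := by
      rw [lap_congr hev]; exact lap_phi α c h0
    have hu : gluedFootball α β z
        = Real.log (2 * (α + 1) * ‖z‖ ^ α / (1 + ‖z‖ ^ (2 + 2 * α))) := by
      rw [gluedFootball, if_pos hlt]
    rw [hu, hlap, sq2_eq z, curv_calc α α hα1 (norm_pos_iff.mpr h0)]
    field_simp
  -- outer curvature
  have Kout : ∀ z : ℂ, 1 < ‖z‖ →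
      -Real.exp (-2 * gluedFootball α β z) * lap (gluedFootball α β) z
        = (β + 1) ^ 2 / (α + 1) ^ 2 := by
    intro z hgt
    have h0 : z ≠ 0 := by
      intro h; rw [h, norm_zero] at hgt; linarith
    have e1 : ∀ᶠ w in 𝓝 z, 1 < ‖w‖ :=
      continuous_norm.continuousAt.eventually (eventually_gt_nhds hgt)
    have hev : gluedFootball α β =ᶠ[𝓝 z] fun w => phi β c (sq2 w) := by
      filter_upwards [e1] with w hw1
      exact glued_outer α β hα1 hw1.le
    have hlap : lap (gluedFootball α β) z
        = -4 * (1 + β) ^ 2 * (sq2 z) ^ β / (1 + (sq2 z) ^ (1 + β)) ^ 2 := by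
      rw [lap_congr hev]; exact lap_phi β c h0
    have hu : gluedFootball α β z
        = Real.log (2 * (α + 1) * ‖z‖ ^ β / (1 + ‖z‖ ^ (2 + 2 * β))) := by
      rw [gluedFootball, if_neg (not_lt.mpr hgt.le)]
    rw [hu, hlap, sq2_eq z, curv_calc α β hα1 (norm_pos_iff.mpr h0)]
  have hρ1 : (β + 1) ^ 2 / (α + 1) ^ 2 ≤ 1 := by
    rw [div_le_one (by positivity)]
    have : β + 1 ≤ α + 1 := by linarith
    exact pow_le_pow_left₀ hβ1.le this 2
  refine ⟨Kin, Kout, ⟨⟨2, ?_, ?_, ?_⟩, ?_⟩, ⟨⟨(1/2 : ℂ), ?_, ?_, ?_⟩, ?_⟩⟩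
  · norm_num
  · have : ‖(2:ℂ)‖ = 2 := by norm_num
    rw [this]; norm_num
  · have : ‖(2:ℂ)‖ = 2 := by norm_num
    exact (Kout 2 (by rw [this]; norm_num)).symm
  · rintro k ⟨z, h0, hne, rfl⟩
    rcases lt_or_gt_of_ne hne with hlt | hgt
    · rw [Kin z h0 hlt]; exact hρ1
    · rw [Kout z hgt]
  · norm_num
  · have : ‖(1/2 : ℂ)‖ = 1/2 := by norm_num
    rw [this]; norm_num
  · have habs : ‖(1/2 : ℂ)‖ = 1/2 := by norm_num
    exact (Kin (1/2 : ℂ) (by norm_num) (by rw [habs]; norm_num)).symm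
  · rintro k ⟨z, h0, hne, rfl⟩
    rcases lt_or_gt_of_ne hne with hlt | hgt
    · rw [Kin z h0 hlt]
    · rw [Kout z hgt]; exact hρ1
end

section
/- Let $a,b > 0$ with $a \le b$, let $H \in \mathbb{R}$, and let $A : (-\infty, H] \to \mathbb{R}$ be a nonnegative absolutely continuous function with $A(H) = 0$ satisfying the differential inequality $\frac{b}{4a\pi}A(t)^2 \ge \frac{b}{4a\pi}A(t)A'(t) + A(t)$ for almost every $t$, with $A' \le 0$ and $A>0$ for $t<H$. Then $A(t) \ge \frac{4a\pi}{b}\big(1 - e^{t-H}\big)$ for all $t \le H$. -/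
open Real MeasureTheory

theorem stmt9 (a b H : ℝ) (ha : 0 < a) (hab : a ≤ b) (A : ℝ → ℝ)
    (hcont : ContinuousOn A (Set.Iic H))
    (hAC : ∀ s t : ℝ, s ≤ t → t ≤ H → A t - A s = ∫ r in s..t, deriv A r)
    (hnn : ∀ t ≤ H, 0 ≤ A t) (hpos : ∀ t < H, 0 < A t) (hAH : A H = 0)
    (hineq : ∀ᵐ t : ℝ, t < H →
      b / (4 * a * π) * (A t) ^ 2 ≥ b / (4 * a * π) * A t * deriv A t + A t ∧ deriv A t ≤ 0) :
    ∀ t ≤ H, A t ≥ 4 * a * π / b * (1 - Real.exp (t - H)) := by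
  have hb : 0 < b := lt_of_lt_of_le ha hab
  have hπ : 0 < π := Real.pi_pos
  set c : ℝ := 4 * a * π / b with hc
  have hc0 : 0 < c := by positivity
  have hCc : b / (4 * a * π) * c = 1 := by
    field_simp [hc]
    rw [hc]; field_simp
  have hC0 : 0 < b / (4 * a * π) := by positivity
  -- key pointwise a.e. inequality: deriv A ≤ A - c  for t < H
  have hkey : ∀ᵐ r : ℝ, r < H → deriv A r ≤ A r - c := by
    filter_upwards [hineq] with r hr hrH
    have hA := hpos r hrH
    have h1 := (hr hrH).1
    nlinarith [mul_pos hC0 hA]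
  -- A is antitone on Iic H
  have hanti : ∀ s t : ℝ, s ≤ t → t ≤ H → A t ≤ A s := by
    intro s t hst htH
    have hid := hAC s t hst htH
    by_cases hi : IntervalIntegrable (deriv A) volume s t
    · have hle : (∫ r in s..t, deriv A r) ≤ ∫ r in s..t, (0 : ℝ) := by
        apply intervalIntegral.integral_mono_ae_restrict hst hi intervalIntegrable_const
        have hne : ∀ᵐ r : ℝ, r ≠ H := by
          have : (volume : Measure ℝ) {H} = 0 := measure_singleton H
          exact ae_iff.mpr (by simpa using this)
        filter_upwards [ae_restrict_of_ae hineq, ae_restrict_of_ae hne,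
          ae_restrict_mem measurableSet_Icc] with r h1 h2 h3
        rcases lt_or_eq_of_le (le_trans h3.2 htH) with h | h
        · exact (h1 h).2
        · exact absurd h h2
      simp only [intervalIntegral.integral_zero] at hle
      linarith
    · rw [intervalIntegral.integral_undef hi] at hid
      linarith
  intro t0 ht0H
  rcases eq_or_lt_of_le ht0H with rfl | ht0
  · simp [hAH]
  by_contra hlt
  push_neg at hlt
  -- the set of points where A touches the comparison function
  set S : Set ℝ := (Set.Icc t0 H) ∩ (fun s => A s - c * (1 - Real.exp (s - H))) ⁻¹' {0} with hS
  have hmcont : ContinuousOn (fun s => A s - c * (1 - Real.exp (s - H))) (Set.Icc t0 H) := by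
    apply ContinuousOn.sub (hcont.mono (Set.Icc_subset_Iic_self))
    fun_prop
  have hScl : IsClosed S :=
    hmcont.preimage_isClosed_of_isClosed isClosed_Icc isClosed_singleton
  have hHne : H ∈ S := by
    constructor
    · exact ⟨le_of_lt ht0, le_refl H⟩
    · simp [hAH]
  have hSne : S.Nonempty := ⟨H, hHne⟩
  have hSbdd : BddBelow S := ⟨t0, fun x hx => hx.1.1⟩
  set t1 : ℝ := sInf S with ht1
  have ht1S : t1 ∈ S := hScl.csInf_mem hSne hSbdd
  have ht1le : ∀ s ∈ S, t1 ≤ s := fun s hs => csInf_le hSbdd hs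
  have ht01 : t0 ≤ t1 := ht1S.1.1
  have ht1H : t1 ≤ H := ht1S.1.2
  have ht1eq : A t1 = c * (1 - Real.exp (t1 - H)) := by
    have := ht1S.2
    simp only [Set.mem_preimage, Set.mem_singleton_iff] at this
    linarith
  -- strict inequality on [t0, t1)
  have hstrict : ∀ s, t0 ≤ s → s < t1 → A s < c * (1 - Real.exp (s - H)) := by
    intro s hs0 hs1
    by_contra hge
    push_neg at hge
    have hsH : s ≤ H := le_trans (le_of_lt hs1) ht1H
    rcases eq_or_lt_of_le hge with heq | hgt
    · exact absurd (ht1le s ⟨⟨hs0, hsH⟩, by simp [heq.symm]⟩) (not_le.mpr hs1)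
    · -- IVT on [t0, s]
      have hiv := intermediate_value_Icc hs0
        (hmcont.mono (Set.Icc_subset_Icc le_rfl hsH))
      have h0mem : (0 : ℝ) ∈ Set.Icc (A t0 - c * (1 - Real.exp (t0 - H)))
          (A s - c * (1 - Real.exp (s - H))) := ⟨by linarith, by linarith⟩
      obtain ⟨x, hx, hx0⟩ := hiv h0mem
      have hxS : x ∈ S := ⟨⟨hx.1, le_trans hx.2 hsH⟩, by simp [hx0]⟩
      exact absurd (le_trans (ht1le x hxS) hx.2) (not_le.mpr hs1)
  have ht0lt1 : t0 < t1 := by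
    rcases eq_or_lt_of_le ht01 with h | h
    · rw [← h] at ht1eq; linarith
    · exact h
  -- integrability of deriv A on [t0, t1]
  have hInt2 : IntervalIntegrable (fun r => A r - c) volume t0 t1 := by
    apply ContinuousOn.intervalIntegrable
    rw [Set.uIcc_of_le ht01]
    exact ((hcont.mono (fun x hx => le_trans hx.2 ht1H)).sub continuousOn_const)
  have hi : IntervalIntegrable (deriv A) volume t0 t1 := by
    by_contra hni
    -- then A t1 = A t0, so A is constant on [t0,t1], so deriv A = 0 there
    have hid := hAC t0 t1 ht01 ht1H
    rw [intervalIntegral.integral_undef hni] at hid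
    have hconst : ∀ s, t0 ≤ s → s ≤ t1 → A s = A t0 := by
      intro s h1 h2
      have := hanti t0 s h1 (le_trans h2 ht1H)
      have := hanti s t1 h2 ht1H
      linarith
    have hderiv0 : ∀ x ∈ Set.Ioo t0 t1, deriv A x = 0 := by
      intro x hx
      have hev : A =ᶠ[nhds x] fun _ => A t0 := by
        filter_upwards [isOpen_Ioo.mem_nhds hx] with y hy
        exact hconst y (le_of_lt hy.1) (le_of_lt hy.2)
      rw [hev.deriv_eq]
      exact deriv_const x (A t0)
    apply hni
    rw [intervalIntegrable_iff_integrableOn_Ioc_of_le ht01]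
    have hae : deriv A =ᵐ[volume.restrict (Set.Ioc t0 t1)] (fun _ => (0:ℝ)) := by
      have hne : ∀ᵐ r : ℝ, r ≠ t1 := by
        have : (volume : Measure ℝ) {t1} = 0 := measure_singleton t1
        exact ae_iff.mpr (by simpa using this)
      filter_upwards [ae_restrict_of_ae hne, ae_restrict_mem measurableSet_Ioc] with r h1 h2
      exact hderiv0 r ⟨h2.1, lt_of_le_of_ne h2.2 h1⟩
    exact ((integrableOn_const_iff (C := (0:ℝ))).mpr (Or.inl (by simp))).congr hae.symm
  -- main chain of inequalities
  have hid := hAC t0 t1 ht01 ht1H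
  have h2 : (∫ r in t0..t1, deriv A r) ≤ ∫ r in t0..t1, (A r - c) := by
    apply intervalIntegral.integral_mono_ae_restrict ht01 hi hInt2
    have hne : ∀ᵐ r : ℝ, r ≠ H := by
      have : (volume : Measure ℝ) {H} = 0 := measure_singleton H
      exact ae_iff.mpr (by simpa using this)
    filter_upwards [ae_restrict_of_ae hkey, ae_restrict_of_ae hne,
      ae_restrict_mem measurableSet_Icc] with r h1 h2 h3
    exact h1 (lt_of_le_of_ne (le_trans h3.2 ht1H) h2)
  have hInt3 : IntervalIntegrable (fun r => -(c * Real.exp (r - H))) volume t0 t1 := by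
    apply Continuous.intervalIntegrable
    fun_prop
  have h3 : (∫ r in t0..t1, (A r - c)) ≤ ∫ r in t0..t1, -(c * Real.exp (r - H)) := by
    apply intervalIntegral.integral_mono_ae_restrict ht01 hInt2 hInt3
    have hne : ∀ᵐ r : ℝ, r ≠ t1 := by
      have : (volume : Measure ℝ) {t1} = 0 := measure_singleton t1
      exact ae_iff.mpr (by simpa using this)
    filter_upwards [ae_restrict_of_ae hne, ae_restrict_mem measurableSet_Icc] with r h1 h2
    have := hstrict r h2.1 (lt_of_le_of_ne h2.2 h1)
    linarith
  have h4 : (∫ r in t0..t1, -(c * Real.exp (r - H)))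
      = -(c * (Real.exp (t1 - H) - Real.exp (t0 - H))) := by
    rw [intervalIntegral.integral_neg, intervalIntegral.integral_const_mul]
    rw [intervalIntegral.integral_comp_sub_right (fun x => Real.exp x) H, integral_exp]
  have hexp : Real.exp (t0 - H) ≤ Real.exp (t1 - H) :=
    Real.exp_le_exp.mpr (by linarith)
  -- conclude
  rw [h4] at h3
  nlinarith
end

section
/- For $-1 < \beta \le \alpha \le 0$, the glued football metric $g = e^{2u_{\alpha,\beta}}g_0$ has total curvature $\int_{\mathbb{C}} K(g)e^{2u_{\alpha,\beta}}\,dz = 2\pi(2 + \alpha + \beta)$, i.e., it satisfies the conic Gauss–Bonnet formula for the divisor $D = \alpha\cdot 0 + \beta\cdot\infty$ on $S^2$. -/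
open Real MeasureTheory

/-- antiderivative -/
noncomputable def fbF (c y : ℝ) : ℝ := -2 * (c + 1) / (1 + y ^ (2 + 2 * c))

/-- its derivative -/
noncomputable def fbF' (c y : ℝ) : ℝ :=
  4 * (c + 1) ^ 2 * y ^ (1 + 2 * c) / (1 + y ^ (2 + 2 * c)) ^ 2

lemma fbDenom_pos {c y : ℝ} (hy : 0 ≤ y) : 0 < 1 + y ^ (2 + 2 * c) := by
  have : 0 ≤ y ^ (2 + 2 * c) := Real.rpow_nonneg hy _
  linarith

lemma hasDerivAt_fbF {c : ℝ} (hc : -1 < c) {y : ℝ} (hy : 0 < y) :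
    HasDerivAt (fbF c) (fbF' c y) y := by
  have hD : HasDerivAt (fun y : ℝ => 1 + y ^ (2 + 2 * c))
      ((2 + 2 * c) * y ^ ((2 + 2 * c) - 1)) y :=
    (Real.hasDerivAt_rpow_const (Or.inl hy.ne')).const_add 1
  have hne : (1 : ℝ) + y ^ (2 + 2 * c) ≠ 0 := (fbDenom_pos hy.le).ne'
  have := (hD.inv hne).const_mul (-2 * (c + 1))
  convert this using 1
  · rfl
  · rfl
  · rfl
  have : (2 + 2 * c) - 1 = 1 + 2 * c := by ring
  rw [this]
  rw [fbF']
  field_simp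
  ring

lemma continuousOn_fbF {c : ℝ} (hc : -1 < c) : ContinuousOn (fbF c) (Set.Ici 0) := by
  have hD : ContinuousOn (fun y : ℝ => 1 + y ^ (2 + 2 * c)) (Set.Ici 0) := by
    refine continuousOn_const.add ?_
    intro y _
    exact (Real.continuousAt_rpow_const y _ (Or.inr (by linarith))).continuousWithinAt
  refine continuousOn_const.div hD ?_
  intro y hy
  exact (fbDenom_pos hy).ne'

lemma tendsto_fbF {c : ℝ} (hc : -1 < c) :
    Filter.Tendsto (fbF c) Filter.atTop (nhds 0) := by
  have h1 : Filter.Tendsto (fun y : ℝ => 1 + y ^ (2 + 2 * c)) Filter.atTop Filter.atTop := by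
    apply Filter.tendsto_atTop_add_const_left
    exact tendsto_rpow_atTop (by linarith)
  have := (h1.inv_tendsto_atTop).const_mul (-2 * (c + 1))
  have heq : ∀ k : ℝ, -(2 * (c + 1) * (1 + k ^ (2 + 2 * c))⁻¹) = fbF c k := by
    intro k; rw [fbF]; field_simp
  simp only [mul_zero] at this
  exact Filter.Tendsto.congr (fun k => heq k) (by simpa using this)

lemma fbF'_nonneg {c : ℝ} (hc : -1 < c) {y : ℝ} (hy : 0 ≤ y) : 0 ≤ fbF' c y := by
  have h1 : 0 ≤ y ^ (1 + 2 * c) := Real.rpow_nonneg hy _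
  have h2 : 0 < (1 + y ^ (2 + 2 * c)) ^ 2 := pow_pos (fbDenom_pos hy) 2
  have : (0:ℝ) ≤ 4 * (c + 1) ^ 2 := by positivity
  exact div_nonneg (by positivity) h2.le

/-- The outer integral. -/
lemma integral_fbF'_Ioi {c : ℝ} (hc : -1 < c) :
    ∫ y in Set.Ioi (1:ℝ), fbF' c y = c + 1 := by
  have h := integral_Ioi_of_hasDerivAt_of_nonneg (g := fbF c) (g' := fbF' c) (a := 1)
      (((continuousOn_fbF hc).continuousWithinAt (by norm_num)).mono
        (Set.Ici_subset_Ici.2 (by norm_num)))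
      (fun y hy => hasDerivAt_fbF hc (by linarith [hy.out] : (0:ℝ) < y))
      (fun y hy => fbF'_nonneg hc (by linarith [hy.out]))
      (tendsto_fbF hc)
  rw [h, fbF]
  rw [Real.one_rpow]
  ring

lemma integrableOn_fbF'_Ioc {c : ℝ} (hc : -1 < c) :
    IntegrableOn (fbF' c) (Set.Ioc (0:ℝ) 1) :=
  intervalIntegral.integrableOn_deriv_of_nonneg
    ((continuousOn_fbF hc).mono (Set.Icc_subset_Ici_self))
    (fun y hy => hasDerivAt_fbF hc hy.1)
    (fun y hy => fbF'_nonneg hc hy.1.le)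

lemma integrableOn_fbF'_Ioi {c : ℝ} (hc : -1 < c) :
    IntegrableOn (fbF' c) (Set.Ioi (1:ℝ)) :=
  integrableOn_Ioi_deriv_of_nonneg
    (((continuousOn_fbF hc).continuousWithinAt (by norm_num)).mono
      (Set.Ici_subset_Ici.2 (by norm_num)))
    (fun y hy => hasDerivAt_fbF hc (by linarith [hy.out]))
    (fun y hy => fbF'_nonneg hc (by linarith [hy.out]))
    (tendsto_fbF hc)

/-- The inner integral. -/
lemma integral_fbF'_Ioc {c : ℝ} (hc : -1 < c) :
    ∫ y in Set.Ioc (0:ℝ) 1, fbF' c y = c + 1 := by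
  have h := intervalIntegral.integral_eq_sub_of_hasDeriv_right_of_le (a := (0:ℝ)) (b := 1)
    zero_le_one ((continuousOn_fbF hc).mono (Set.Icc_subset_Ici_self))
    (fun y hy => (hasDerivAt_fbF hc hy.1).hasDerivWithinAt)
    ((intervalIntegrable_iff_integrableOn_Ioc_of_le zero_le_one).2 (integrableOn_fbF'_Ioc hc))
  rw [intervalIntegral.integral_of_le zero_le_one] at h
  rw [h, fbF, fbF, Real.one_rpow, Real.zero_rpow (ne_of_gt (by linarith : (0:ℝ) < 2 + 2*c))]
  norm_num
  ring

lemma piece_eq {a c y : ℝ} (ha : 0 < a + 1) (hy : 0 < y) :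
    y * ((c + 1) ^ 2 / (a + 1) ^ 2
        * Real.exp (2 * Real.log (2 * (a + 1) * y ^ c / (1 + y ^ (2 + 2 * c))))) = fbF' c y := by
  set A : ℝ := 2 * (a + 1) * y ^ c / (1 + y ^ (2 + 2 * c)) with hA
  have hApos : 0 < A := by
    apply div_pos _ (fbDenom_pos hy.le)
    have := Real.rpow_pos_of_pos hy c
    positivity
  have hexp : Real.exp (2 * Real.log A) = A ^ 2 := by
    rw [show (2 : ℝ) * Real.log A = Real.log (A ^ 2) by
      rw [Real.log_pow]; norm_num]
    exact Real.exp_log (by positivity)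
  rw [hexp, hA, fbF', div_pow, mul_pow, mul_pow]
  have h1 : (y ^ c) ^ 2 = y ^ (2 * c) := by
    rw [← Real.rpow_natCast (y ^ c) 2, ← Real.rpow_mul hy.le]
    norm_num [mul_comm]
  have h2 : y * y ^ (2 * c) = y ^ (1 + 2 * c) := by
    rw [Real.rpow_add hy, Real.rpow_one]
  have hD : (0:ℝ) < (1 + y ^ (2 + 2 * c)) ^ 2 := pow_pos (fbDenom_pos hy.le) 2
  rw [h1]
  field_simp
  rw [mul_comm c 2, ← h2]
  ring

theorem stmt18 (α β : ℝ) (h1 : -1 < β) (h2 : β ≤ α) (h3 : α ≤ 0) :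
    (∫ z : ℂ, (if ‖z‖ < 1 then (1 : ℝ) else (β + 1) ^ 2 / (α + 1) ^ 2)
        * Real.exp (2 * gluedFootball α β z))
      = 2 * π * (2 + α + β) := by
  have hα : 0 < α + 1 := by linarith
  have hβ : 0 < β + 1 := by linarith
  have hα' : -1 < α := by linarith
  set f : ℝ → ℝ := fun r =>
    (if r < 1 then (1:ℝ) else (β + 1) ^ 2 / (α + 1) ^ 2) *
      Real.exp (2 * (if r < 1 then Real.log (2 * (α + 1) * r ^ α / (1 + r ^ (2 + 2 * α)))
        else Real.log (2 * (α + 1) * r ^ β / (1 + r ^ (2 + 2 * β))))) with hf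
  have hfun : (fun z : ℂ => (if ‖z‖ < 1 then (1:ℝ) else (β + 1) ^ 2 / (α + 1) ^ 2)
      * Real.exp (2 * gluedFootball α β z)) = fun z : ℂ => f ‖z‖ := by
    funext z
    simp only [hf, gluedFootball]
  rw [show (∫ z : ℂ, (if ‖z‖ < 1 then (1 : ℝ) else (β + 1) ^ 2 / (α + 1) ^ 2)
        * Real.exp (2 * gluedFootball α β z)) = ∫ z : ℂ, f ‖z‖ by rw [hfun]]
  rw [integral_fun_norm_addHaar volume f]
  have hball : (volume (Metric.ball (0:ℂ) 1)).toReal = π := by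
    simp [Complex.volume_ball]
  rw [Complex.finrank_real_complex, measureReal_def, hball]
  have key : ∫ y in Set.Ioi (0:ℝ), y ^ (2 - 1) • f y = 2 + α + β := by
    simp only [Nat.reduceSub, pow_one, smul_eq_mul]
    have heq1 : Set.EqOn (fun y : ℝ => y * f y) (fbF' α) (Set.Ioo 0 1) := by
      intro y hy
      have hp := piece_eq (c := α) hα hy.1
      rw [div_self (pow_ne_zero 2 hα.ne')] at hp
      simpa only [hf, if_pos hy.2] using hp
    have heq2 : Set.EqOn (fun y : ℝ => y * f y) (fbF' β) (Set.Ici 1) := by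
      intro y hy
      have hy0 : (0:ℝ) < y := lt_of_lt_of_le zero_lt_one hy
      have hp := piece_eq (c := β) hα hy0
      simpa only [hf, if_neg (not_lt.2 hy.out)] using hp
    have int1 : IntegrableOn (fun y : ℝ => y * f y) (Set.Ioo 0 1) :=
      IntegrableOn.congr_fun ((integrableOn_fbF'_Ioc hα').mono Set.Ioo_subset_Ioc_self le_rfl)
        heq1.symm measurableSet_Ioo
    have int2 : IntegrableOn (fun y : ℝ => y * f y) (Set.Ici 1) :=
      IntegrableOn.congr_fun ((integrableOn_Ici_iff_integrableOn_Ioi (f := fbF' β) (b := 1)).2 (integrableOn_fbF'_Ioi h1))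
        heq2.symm measurableSet_Ici
    rw [show Set.Ioi (0:ℝ) = Set.Ioo 0 1 ∪ Set.Ici 1 from
      (Set.Ioo_union_Ici_eq_Ioi zero_lt_one).symm]
    rw [setIntegral_union (by
        refine Set.disjoint_left.2 fun y hy hy' => ?_
        exact absurd hy.2 (not_lt.2 hy'.out)) measurableSet_Ici int1 int2]
    rw [setIntegral_congr_fun measurableSet_Ioo heq1,
      setIntegral_congr_fun measurableSet_Ici heq2]
    rw [← integral_Ioc_eq_integral_Ioo, integral_Ici_eq_integral_Ioi,
      integral_fbF'_Ioc hα', integral_fbF'_Ioi h1]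
    ring
  rw [key]
  simp only [smul_eq_mul, nsmul_eq_mul]
  push_cast
  ring
end
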